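/- arXiv:2101.08223 — 2 statements merged into one kernel-verified Lean document; each statement's English description precedes it below -/
import Mathlib

section
/- The 3DSMI instance of dimension 4 with vertex set {v_0,…,v_8, w_2, w_3, w_4} (vertex v_i or w_i having gender i mod 3, edges going from gender g to gender (g+1) mod 3), whose edges are: v_i → v_{(i+1) mod 9} for i = 0,…,8 with rank 1; w_i → v_{i-2} for i = 2,3,4 with rank 1; v_i → w_{i+1} for i = 1,2,3 with rank 2; and v_i → v_{(i+4) mod 9} for i = 0,…,8, with rank 2 for i ∈ {0,4,5,6,7,8} and rank 3 for i ∈ {1,2,3}, admits no weakly stable matching. -/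
/-- A 3DSMI instance of dimension `n`: a directed graph on a vertex set `V`
partitioned into three genders (men, women, dogs), each of size `n`, where every
edge goes from gender `g` to gender `g+1`, together with a rank function such that
for every vertex of out-degree `k` the ranks of its outgoing edges are exactly
`1, …, k`. -/
structure TDSMI (V : Type) [Fintype V] [DecidableEq V] (n : ℕ) where
  E : V → V → Bool
  r : V → V → ℕ
  gender : V → Fin 3
  gender_card : ∀ g : Fin 3, (Finset.univ.filter fun v => gender v = g).card = n
  edge_gender : ∀ v w : V, E v w → gender w = gender v + 1
  rank_bij : ∀ v : V,
    (Finset.univ.filter fun w => E v w).image (r v)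
      = Finset.Icc 1 (Finset.univ.filter fun w => E v w).card

namespace TDSMI

variable {V : Type} [Fintype V] [DecidableEq V] {n : ℕ}

/-- A family: a directed 3-cycle `a → b → c → a`. -/
def IsFamily (G : TDSMI V n) (a b c : V) : Prop :=
  G.E a b ∧ G.E b c ∧ G.E c a

/-- `v` is one of the vertices of the triple `t`. -/
def MemTriple (v : V) (t : V × V × V) : Prop :=
  v = t.1 ∨ v = t.2.1 ∨ v = t.2.2

/-- A matching: a set of pairwise vertex-disjoint families. -/
def IsMatching (G : TDSMI V n) (F : Finset (V × V × V)) : Prop :=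
  (∀ t ∈ F, G.IsFamily t.1 t.2.1 t.2.2) ∧
  ∀ t ∈ F, ∀ t' ∈ F, t ≠ t' → ∀ v : V, ¬ (MemTriple v t ∧ MemTriple v t')

/-- `w` is the vertex that the edge leaving `v` inside its family of `F` points to. -/
def MatchedTo (F : Finset (V × V × V)) (v w : V) : Prop :=
  ∃ t ∈ F, (t.1 = v ∧ t.2.1 = w) ∨ (t.2.1 = v ∧ t.2.2 = w) ∨ (t.2.2 = v ∧ t.1 = w)

/-- `r(v,w) < R_F(v)`: the rank of the edge `v → w` is smaller than the rank of `v` in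
the matching `F` (if `v` is in no family of `F`, its rank is `+∞` and this holds
vacuously). -/
def Prefers (G : TDSMI V n) (F : Finset (V × V × V)) (v w : V) : Prop :=
  ∀ u : V, MatchedTo F v u → G.r v w < G.r v u

/-- The directed 3-cycle `(a, b, c)` blocks the matching `F`. -/
def Blocks (G : TDSMI V n) (F : Finset (V × V × V)) (a b c : V) : Prop :=
  G.IsFamily a b c ∧ G.Prefers F a b ∧ G.Prefers F b c ∧ G.Prefers F c a

/-- A matching is weakly stable if no directed 3-cycle blocks it. -/
def WeaklyStable (G : TDSMI V n) (F : Finset (V × V × V)) : Prop :=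
  ∀ a b c : V, ¬ G.Blocks F a b c

end TDSMI

/- Vertices `0,…,8` are `v_0,…,v_8`; vertices `9, 10, 11` are `w_2, w_3, w_4`. -/

def rank1Edges : List (ℕ × ℕ) :=
  [(0,1),(1,2),(2,3),(3,4),(4,5),(5,6),(6,7),(7,8),(8,0),(9,0),(10,1),(11,2)]
def rank2Edges : List (ℕ × ℕ) :=
  [(1,9),(2,10),(3,11),(0,4),(4,8),(5,0),(6,1),(7,2),(8,3)]
def rank3Edges : List (ℕ × ℕ) := [(1,5),(2,6),(3,7)]

/-- The 3DSMI instance of dimension 4 from the Appendix of the paper. -/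
def G4 : TDSMI (Fin 12) 4 where
  E v w := decide ((v.val, w.val) ∈ rank1Edges ++ rank2Edges ++ rank3Edges)
  r v w :=
    if (v.val, w.val) ∈ rank1Edges then 1
    else if (v.val, w.val) ∈ rank2Edges then 2
    else if (v.val, w.val) ∈ rank3Edges then 3
    else 0
  gender v := ⟨(if v.val < 9 then v.val else v.val - 7) % 3, Nat.mod_lt _ (by norm_num)⟩
  gender_card := by decide
  edge_gender := by decide
  rank_bij := by decide

section Instances

variable {V : Type} [Fintype V] [DecidableEq V] {n : ℕ}

instance (G : TDSMI V n) (a b c : V) : Decidable (G.IsFamily a b c) := by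
  unfold TDSMI.IsFamily; infer_instance

instance (v : V) (t : V × V × V) : Decidable (TDSMI.MemTriple v t) := by
  unfold TDSMI.MemTriple; infer_instance

instance (F : Finset (V × V × V)) (v w : V) : Decidable (TDSMI.MatchedTo F v w) := by
  unfold TDSMI.MatchedTo; infer_instance

instance (G : TDSMI V n) (F : Finset (V × V × V)) (v w : V) :
    Decidable (G.Prefers F v w) := by
  unfold TDSMI.Prefers; infer_instance

instance (G : TDSMI V n) (F : Finset (V × V × V)) (a b c : V) :
    Decidable (G.Blocks F a b c) := by
  unfold TDSMI.Blocks; infer_instance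

end Instances

/-- Canonical rotation of a triple: smallest component first. -/
def canon (t : Fin 12 × Fin 12 × Fin 12) : Fin 12 × Fin 12 × Fin 12 :=
  if t.1 ≤ t.2.1 ∧ t.1 ≤ t.2.2 then t
  else if t.2.1 ≤ t.2.2 then (t.2.1, t.2.2, t.1)
  else (t.2.2, t.1, t.2.1)

/-- The 12 canonical families of `G4`, ordered so blocking witnesses come early. -/
def blockL : List (Fin 12 × Fin 12 × Fin 12) :=
  [(2,3,11),(0,1,9),(1,2,10),(3,4,8),(0,4,5),(0,1,5),(0,4,8),(1,2,6),(1,5,6),(2,3,7),(2,6,7),(3,7,8)]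

lemma canon_mem_blockL : ∀ a b c : Fin 12,
    G4.IsFamily a b c → canon (a, b, c) ∈ blockL := by decide

lemma canon_memTriple (t : Fin 12 × Fin 12 × Fin 12) (v : Fin 12) :
    TDSMI.MemTriple v (canon t) ↔ TDSMI.MemTriple v t := by
  obtain ⟨a, b, c⟩ := t
  simp only [canon, TDSMI.MemTriple]
  split_ifs <;> simp <;> tauto

lemma canon_pairs (t : Fin 12 × Fin 12 × Fin 12) (v w : Fin 12) :
    (((canon t).1 = v ∧ (canon t).2.1 = w) ∨ ((canon t).2.1 = v ∧ (canon t).2.2 = w) ∨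
      ((canon t).2.2 = v ∧ (canon t).1 = w)) ↔
    ((t.1 = v ∧ t.2.1 = w) ∨ (t.2.1 = v ∧ t.2.2 = w) ∨ (t.2.2 = v ∧ t.1 = w)) := by
  obtain ⟨a, b, c⟩ := t
  simp only [canon]
  split_ifs <;> simp <;> tauto

lemma matchedTo_image_canon (F : Finset (Fin 12 × Fin 12 × Fin 12)) (v w : Fin 12) :
    TDSMI.MatchedTo (F.image canon) v w ↔ TDSMI.MatchedTo F v w := by
  constructor
  · rintro ⟨t, ht, hp⟩
    rw [Finset.mem_image] at ht
    obtain ⟨t0, ht0, rfl⟩ := ht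
    exact ⟨t0, ht0, (canon_pairs t0 v w).mp hp⟩
  · rintro ⟨t, ht, hp⟩
    exact ⟨canon t, Finset.mem_image_of_mem _ ht, (canon_pairs t v w).mpr hp⟩

/-! ### Boolean-level computation -/

def verts : List (Fin 12) := [0,1,2,3,4,5,6,7,8,9,10,11]

lemma mem_verts : ∀ v : Fin 12, v ∈ verts := by decide

def pairB (t : Fin 12 × Fin 12 × Fin 12) (v w : Fin 12) : Bool :=
  (t.1 == v && t.2.1 == w) || (t.2.1 == v && t.2.2 == w) || (t.2.2 == v && t.1 == w)

def matchedB (l : List (Fin 12 × Fin 12 × Fin 12)) (v w : Fin 12) : Bool :=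
  l.any fun t => pairB t v w

def prefB (l : List (Fin 12 × Fin 12 × Fin 12)) (v w : Fin 12) : Bool :=
  decide (∀ u ∈ verts, matchedB l v u = true → G4.r v w < G4.r v u)

def blocksB (l : List (Fin 12 × Fin 12 × Fin 12)) (t : Fin 12 × Fin 12 × Fin 12) : Bool :=
  decide (G4.IsFamily t.1 t.2.1 t.2.2) && prefB l t.1 t.2.1 && prefB l t.2.1 t.2.2
    && prefB l t.2.2 t.1

def okB (l : List (Fin 12 × Fin 12 × Fin 12)) : Bool :=
  blockL.any (blocksB l)

def vdisjB (t t' : Fin 12 × Fin 12 × Fin 12) : Bool :=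
  decide (∀ v ∈ verts, ¬ (TDSMI.MemTriple v t ∧ TDSMI.MemTriple v t'))

/-- Pruned search over all vertex-disjoint subsets of `rest` (added to `cur`),
checking `okB` at each completed subset. -/
def srch : List (Fin 12 × Fin 12 × Fin 12) → List (Fin 12 × Fin 12 × Fin 12) → Bool
  | [], cur => okB cur
  | t :: ts, cur => srch ts cur && (!(cur.all (vdisjB t)) || srch ts (t :: cur))

lemma srch_true : srch blockL [] = true := by decide

/-! ### Bridging lemmas -/

lemma matched_iff (l : List (Fin 12 × Fin 12 × Fin 12)) (v w : Fin 12) :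
    matchedB l v w = true ↔ TDSMI.MatchedTo l.toFinset v w := by
  simp only [matchedB, pairB, TDSMI.MatchedTo, List.any_eq_true, List.mem_toFinset,
    Bool.or_eq_true, Bool.and_eq_true, beq_iff_eq]
  constructor
  · rintro ⟨t, ht, hp⟩; exact ⟨t, ht, by tauto⟩
  · rintro ⟨t, ht, hp⟩; exact ⟨t, ht, by tauto⟩

lemma pref_iff (l : List (Fin 12 × Fin 12 × Fin 12)) (v w : Fin 12) :
    prefB l v w = true ↔ G4.Prefers l.toFinset v w := by
  rw [prefB, decide_eq_true_iff]
  constructor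
  · intro h u hu
    exact h u (mem_verts u) ((matched_iff l v u).mpr hu)
  · intro h u _ hu
    exact h u ((matched_iff l v u).mp hu)

lemma blocks_iff (l : List (Fin 12 × Fin 12 × Fin 12)) (t : Fin 12 × Fin 12 × Fin 12) :
    blocksB l t = true ↔ G4.Blocks l.toFinset t.1 t.2.1 t.2.2 := by
  simp only [blocksB, Bool.and_eq_true, decide_eq_true_iff, pref_iff, TDSMI.Blocks]
  tauto

lemma okB_iff (l : List (Fin 12 × Fin 12 × Fin 12)) :
    okB l = true ↔ ∃ t ∈ blockL, G4.Blocks l.toFinset t.1 t.2.1 t.2.2 := by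
  simp only [okB, List.any_eq_true, blocks_iff]

lemma vdisj_iff (t t' : Fin 12 × Fin 12 × Fin 12) :
    vdisjB t t' = true ↔ ∀ v : Fin 12, ¬ (TDSMI.MemTriple v t ∧ TDSMI.MemTriple v t') := by
  rw [vdisjB, decide_eq_true_iff]
  exact ⟨fun h v => h v (mem_verts v), fun h v _ => h v⟩

lemma vdisjB_symm {t t' : Fin 12 × Fin 12 × Fin 12} (h : vdisjB t t' = true) :
    vdisjB t' t = true := by
  rw [vdisj_iff] at h ⊢
  intro v hv
  exact h v ⟨hv.2, hv.1⟩

/-- The invariant tracked along the search: each element is disjoint from all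
previously chosen ones. -/
def scond : List (Fin 12 × Fin 12 × Fin 12) → List (Fin 12 × Fin 12 × Fin 12) → Prop
  | [], _ => True
  | t :: ts, cur => (∀ t' ∈ cur, vdisjB t t' = true) ∧ scond ts (t :: cur)

lemma scond_of : ∀ (l cur : List (Fin 12 × Fin 12 × Fin 12)),
    (∀ a ∈ l, ∀ b ∈ cur, vdisjB a b = true) →
    l.Pairwise (fun a b => vdisjB a b = true) → scond l cur
  | [], _, _, _ => trivial
  | t :: ts, cur, h, hp => by
    refine ⟨fun t' ht' => h t List.mem_cons_self t' ht', ?_⟩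
    rcases List.pairwise_cons.mp hp with ⟨hhd, htl⟩
    refine scond_of ts (t :: cur) ?_ htl
    intro a ha b hb
    rcases List.mem_cons.mp hb with rfl | hb
    · exact vdisjB_symm (hhd a ha)
    · exact h a (List.mem_cons_of_mem _ ha) b hb

lemma srch_spec : ∀ (rest cur : List (Fin 12 × Fin 12 × Fin 12)),
    srch rest cur = true → ∀ sub, sub.Sublist rest → scond sub cur →
    okB (sub.reverse ++ cur) = true := by
  intro rest
  induction rest with
  | nil =>
    intro cur h sub hsub _
    rw [List.sublist_nil.mp hsub]
    simpa [srch] using h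
  | cons t ts ih =>
    intro cur h sub hsub hc
    rw [srch, Bool.and_eq_true] at h
    obtain ⟨h1, h2⟩ := h
    cases hsub with
    | cons _ hsub' => exact ih cur h1 sub hsub' hc
    | cons_cons _ hsub' =>
      obtain ⟨hd, hc'⟩ := hc
      have hall : cur.all (vdisjB t) = true := List.all_eq_true.mpr hd
      rw [hall] at h2
      simp only [Bool.not_true, Bool.false_or] at h2
      have := ih (t :: cur) h2 _ hsub' hc'
      simpa [List.reverse_cons, List.append_assoc] using this

lemma blockL_nodup : blockL.Nodup := by decide

/-- This instance admits no weakly stable matching. -/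
theorem stmt_4 : ¬ ∃ F : Finset (Fin 12 × Fin 12 × Fin 12),
    G4.IsMatching F ∧ G4.WeaklyStable F := by
  rintro ⟨F, ⟨hfam, hdisj⟩, hstab⟩
  set S : Finset (Fin 12 × Fin 12 × Fin 12) := F.image canon with hSdef
  have hSsub : ∀ t ∈ S, t ∈ blockL := by
    intro t ht
    rw [hSdef, Finset.mem_image] at ht
    obtain ⟨t0, ht0, rfl⟩ := ht
    exact canon_mem_blockL t0.1 t0.2.1 t0.2.2 (hfam t0 ht0)
  have hSdisj : ∀ t ∈ S, ∀ t' ∈ S, t ≠ t' → ∀ v : Fin 12,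
      ¬ (TDSMI.MemTriple v t ∧ TDSMI.MemTriple v t') := by
    intro t ht t' ht' hne v hv
    rw [hSdef, Finset.mem_image] at ht ht'
    obtain ⟨t0, ht0, rfl⟩ := ht
    obtain ⟨t0', ht0', rfl⟩ := ht'
    have hne0 : t0 ≠ t0' := by rintro rfl; exact hne rfl
    exact hdisj t0 ht0 t0' ht0' hne0 v
      ⟨(canon_memTriple t0 v).mp hv.1, (canon_memTriple t0' v).mp hv.2⟩
  set L : List (Fin 12 × Fin 12 × Fin 12) := blockL.filter (fun t => decide (t ∈ S))
    with hLdef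
  have hmemL : ∀ t, t ∈ L ↔ (t ∈ blockL ∧ t ∈ S) := by
    intro t
    rw [hLdef, List.mem_filter, decide_eq_true_iff]
  have hLsub : L.Sublist blockL := List.filter_sublist
  have hLnodup : L.Nodup := blockL_nodup.filter _
  have hLS : L.toFinset = S := by
    ext t
    rw [List.mem_toFinset, hmemL]
    exact ⟨fun h => h.2, fun h => ⟨hSsub t h, h⟩⟩
  have hpair : L.Pairwise (fun a b => vdisjB a b = true) := by
    refine hLnodup.imp_of_mem ?_
    intro a b ha hb hne
    have haS : a ∈ S := ((hmemL a).mp ha).2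
    have hbS : b ∈ S := ((hmemL b).mp hb).2
    exact (vdisj_iff a b).mpr (hSdisj a haS b hbS hne)
  have hcond : scond L [] := scond_of L [] (by intro a _ b hb; cases hb) hpair
  have hok : okB (L.reverse ++ []) = true := srch_spec blockL [] srch_true L hLsub hcond
  rw [List.append_nil] at hok
  obtain ⟨t, -, hb⟩ := (okB_iff _).mp hok
  have hTF : L.reverse.toFinset = S := by rw [List.toFinset_reverse, hLS]
  rw [hTF] at hb
  refine hstab t.1 t.2.1 t.2.2 ?_
  obtain ⟨hf, h1, h2, h3⟩ := hb
  exact ⟨hf, fun u hu => h1 u ((matchedTo_image_canon F _ u).mpr hu),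
    fun u hu => h2 u ((matchedTo_image_canon F _ u).mpr hu),
    fun u hu => h3 u ((matchedTo_image_canon F _ u).mpr hu)⟩
end

section
/- In the 3DSMI instance of dimension 4 on vertices {v_0,…,v_8, w_2, w_3, w_4} with edges v_i → v_{(i+1) mod 9} (i = 0,…,8) of rank 1, w_i → v_{i-2} (i = 2,3,4) of rank 1, v_i → w_{i+1} (i = 1,2,3) of rank 2, and v_i → v_{(i+4) mod 9} (i = 0,…,8) of rank 2 for i ∈ {0,4,5,6,7,8} and rank 3 for i ∈ {1,2,3}: for every i ∈ {0,…,8} (indices mod 9), every matching 𝓜 consisting of the two families (v_i, v_{i+1}, x) and (v_{i+2}, v_{i+3}, y), where x is v_{i+5} or w_{i+2} (the latter only if w_{i+2} exists) and y is v_{i+7} or w_{i+4} (the latter only if w_{i+4} exists), is blocked by the directed 3-cycle (v_{i+3}, v_{i+4}, v_{i+8}). -/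
section DecInstances
variable {V : Type} [Fintype V] [DecidableEq V] {n : ℕ}

instance (G : TDSMI V n) (F : Finset (V × V × V)) : Decidable (G.IsMatching F) := by
  unfold TDSMI.IsMatching
  exact @instDecidableAnd _ _ (by infer_instance) (by infer_instance)

instance inst_s16 (G : TDSMI V n) (F : Finset (V × V × V)) (a b c : V) :
    Decidable (G.Blocks F a b c) := by
  unfold TDSMI.Blocks
  exact @instDecidableAnd _ _ (by infer_instance)
    (@instDecidableAnd _ _ (by infer_instance)
      (@instDecidableAnd _ _ (by infer_instance) (by infer_instance)))

end DecInstances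

/-- The vertex `v_{i mod 9}`. -/
def vx (i : ℕ) : Fin 12 := ⟨i % 9, by omega⟩

/-- The vertex `w_{i mod 9}` (meaningful for `i mod 9 ∈ {2,3,4}`). -/
def wv (i : ℕ) : Fin 12 := ⟨(i % 9 + 7) % 12, by omega⟩

/-- For every `i` (indices mod 9), every matching consisting of the two families
`(v_i, v_{i+1}, x)` and `(v_{i+2}, v_{i+3}, y)`, where `x` is `v_{i+5}` or `w_{i+2}`
(the latter only if `w_{i+2}` exists) and `y` is `v_{i+7}` or `w_{i+4}` (the latter
only if `w_{i+4}` exists), is blocked by the directed 3-cycle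
`(v_{i+3}, v_{i+4}, v_{i+8})`. -/
theorem stmt_16 (i : ℕ) (x y : Fin 12)
    (hx : x = vx (i + 5) ∨ ((i + 2) % 9 ∈ ({2, 3, 4} : Set ℕ) ∧ x = wv (i + 2)))
    (hy : y = vx (i + 7) ∨ ((i + 4) % 9 ∈ ({2, 3, 4} : Set ℕ) ∧ y = wv (i + 4)))
    (hM : G4.IsMatching {(vx i, vx (i + 1), x), (vx (i + 2), vx (i + 3), y)}) :
    G4.Blocks {(vx i, vx (i + 1), x), (vx (i + 2), vx (i + 3), y)}
      (vx (i + 3)) (vx (i + 4)) (vx (i + 8)) := by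
  have hv : ∀ k, vx (i + k) = vx (i % 9 + k) := by
    intro k; simp only [vx, Fin.mk.injEq]; omega
  have hw : ∀ k, wv (i + k) = wv (i % 9 + k) := by
    intro k; simp only [wv, Fin.mk.injEq]; omega
  have hm : ∀ k, (i + k) % 9 = (i % 9 + k) % 9 := by intro k; omega
  have hvi : vx i = vx (i % 9 + 0) := by simp only [vx, Fin.mk.injEq]; omega
  simp only [hvi, hv, hw, hm] at hx hy hM ⊢
  have h9 : i % 9 < 9 := by omega
  generalize i % 9 = j at h9 hx hy hM ⊢
  interval_cases j <;>
    rcases hx with rfl | ⟨hmx, rfl⟩ <;>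
    rcases hy with rfl | ⟨hmy, rfl⟩ <;>
    first
      | (clear hM; decide)
      | (exfalso; simp only [Set.mem_insert_iff, Set.mem_singleton_iff] at hmx; omega)
      | (exfalso; simp only [Set.mem_insert_iff, Set.mem_singleton_iff] at hmy; omega)
end
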